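/- arXiv:2409.11503 — 5 statements merged into one kernel-verified Lean document; each statement's English description precedes it below -/
import Mathlib

section
/- Let K be a 1-symmetric convex body in ℝⁿ (invariant under coordinate sign changes and permutations of coordinates). Then |K| · sup_{y ∈ K°} ∏_{i=1}^n |y_i| ≤ 2ⁿ/n!, where K° is the polar body. -/
open MeasureTheory
open scoped RealInnerProductSpace

/-- The polar body `K° = {y : ⟨x,y⟩ ≤ 1 for all x ∈ K}`. -/
def polarSet {n : ℕ} (K : Set (EuclideanSpace ℝ (Fin n))) : Set (EuclideanSpace ℝ (Fin n)) :=
  {y | ∀ x ∈ K, ⟪x, y⟫ ≤ 1}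

lemma l1ball_volume (n : ℕ) [Nonempty (Fin n)] :
    volume {x : Fin n → ℝ | ∑ i, |x i| ≤ 1} = ENNReal.ofReal (2 ^ n / n.factorial) := by
  have h := MeasureTheory.volume_sum_rpow_le (Fin n) (p := 1) le_rfl 1
  simp only [Real.rpow_one, one_div_one, Fintype.card_fin, div_one] at h
  rw [h, Real.Gamma_nat_eq_factorial]
  norm_num [Real.Gamma_two]

lemma scaled_l1_volume (n : ℕ) [Nonempty (Fin n)] (c : Fin n → ℝ) (hc : ∀ i, 0 < c i) :
    volume {x : Fin n → ℝ | ∑ i, c i * |x i| ≤ 1}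
      = ENNReal.ofReal ((∏ i, c i)⁻¹ * (2 ^ n / n.factorial)) := by
  set f : (Fin n → ℝ) →ₗ[ℝ] (Fin n → ℝ) := Matrix.toLin' (Matrix.diagonal c) with hf
  have hdet : LinearMap.det f = ∏ i, c i := by
    rw [hf, LinearMap.det_toLin', Matrix.det_diagonal]
  have hne : LinearMap.det f ≠ 0 := by
    rw [hdet]; exact Finset.prod_ne_zero_iff.mpr fun i _ => (hc i).ne'
  have hset : {x : Fin n → ℝ | ∑ i, c i * |x i| ≤ 1}
      = f ⁻¹' {x : Fin n → ℝ | ∑ i, |x i| ≤ 1} := by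
    ext x
    simp only [Set.mem_setOf_eq, Set.mem_preimage, hf, Matrix.toLin'_apply,
      Matrix.mulVec_diagonal, abs_mul, abs_of_pos (hc _)]
  rw [hset, Measure.addHaar_preimage_linearMap volume hne, hdet, l1ball_volume,
    ENNReal.ofReal_mul (inv_nonneg.mpr (Finset.prod_nonneg fun i _ => (hc i).le))]
  congr 2
  rw [abs_of_pos (inv_pos.mpr (Finset.prod_pos fun i _ => hc i))]

lemma euclid_scaled_l1_volume (n : ℕ) [Nonempty (Fin n)] (c : Fin n → ℝ) (hc : ∀ i, 0 < c i) :
    volume {x : EuclideanSpace ℝ (Fin n) | ∑ i, c i * |x i| ≤ 1}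
      = ENNReal.ofReal ((∏ i, c i)⁻¹ * (2 ^ n / n.factorial)) := by
  rw [← scaled_l1_volume n c hc]
  have hm : MeasurableSet {x : Fin n → ℝ | ∑ i, c i * |x i| ≤ 1} := by
    refine measurableSet_le ?_ measurable_const
    exact Finset.measurable_sum _ fun i _ =>
      (measurable_const.mul ((measurable_pi_apply i).abs))
  rw [← (EuclideanSpace.volume_preserving_symm_measurableEquiv_toLp (Fin n)).measure_preimage
    hm.nullMeasurableSet]
  rfl

/-- Let `K` be a `1`-symmetric convex body in `ℝⁿ` (invariant under coordinate sign changes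
and permutations of coordinates). Then `|K| · sup_{y ∈ K°} ∏ |yᵢ| ≤ 2ⁿ/n!`. -/
theorem one_symmetric_volume_sup_prod_le (n : ℕ)
    (K : Set (EuclideanSpace ℝ (Fin n)))
    (hconv : Convex ℝ K) (hcomp : IsCompact K) (hint : (interior K).Nonempty)
    (hsym : ∀ x ∈ K, ∀ ε : Fin n → ℝ, (∀ i, ε i = 1 ∨ ε i = -1) →
      ∀ σ : Equiv.Perm (Fin n),
        ((WithLp.equiv 2 (Fin n → ℝ)).symm fun i => ε i * x (σ i)) ∈ K) :
    (volume K).toReal *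
        sSup ((fun y : EuclideanSpace ℝ (Fin n) => ∏ i, |y i|) '' polarSet K)
      ≤ (2 : ℝ) ^ n / (Nat.factorial n : ℝ) := by
  have hvpos : 0 < volume K :=
    lt_of_lt_of_le (isOpen_interior.measure_pos volume hint) (measure_mono interior_subset)
  have hvfin : volume K ≠ ⊤ := hcomp.measure_lt_top.ne
  set V : ℝ := (volume K).toReal with hV
  have hVpos : 0 < V := ENNReal.toReal_pos hvpos.ne' hvfin
  set B : ℝ := (2 : ℝ) ^ n / (Nat.factorial n : ℝ) with hB
  have hBpos : 0 < B := by
    rw [hB]; positivity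
  -- key claim
  have key : ∀ y ∈ polarSet K, V * ∏ i, |y i| ≤ B := by
    intro y hy
    by_cases hzero : ∃ i, y i = 0
    · obtain ⟨i, hi⟩ := hzero
      have : ∏ j, |y j| = 0 :=
        Finset.prod_eq_zero (Finset.mem_univ i) (by simp [hi])
      rw [this, mul_zero]
      exact hBpos.le
    push_neg at hzero
    rcases Nat.eq_zero_or_pos n with hn | hn
    · subst hn
      simp only [Finset.univ_eq_empty, Finset.prod_empty, mul_one]
      have huniv : volume (Set.univ : Set (EuclideanSpace ℝ (Fin 0))) = 1 := by
        have h := (EuclideanSpace.volume_preserving_symm_measurableEquiv_toLp (Fin 0)).measure_preimage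
          (s := Set.univ) MeasurableSet.univ.nullMeasurableSet
        simp only [Set.preimage_univ] at h
        rw [h]
        simp [volume_pi, Measure.pi_univ]
      have : volume K ≤ 1 := huniv ▸ measure_mono (Set.subset_univ K)
      have hV1 : V ≤ 1 := by
        rw [hV]
        simpa using ENNReal.toReal_mono (by simp) this
      simpa [hB] using hV1
    have : Nonempty (Fin n) := Fin.pos_iff_nonempty.mp hn
    set c : Fin n → ℝ := fun i => |y i| with hcdef
    have hc : ∀ i, 0 < c i := fun i => abs_pos.mpr (hzero i)
    have hprodpos : 0 < ∏ i, c i := Finset.prod_pos fun i _ => hc i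
    -- K is contained in the scaled cross-polytope
    have hsub : K ⊆ {x : EuclideanSpace ℝ (Fin n) | ∑ i, c i * |x i| ≤ 1} := by
      intro x hx
      set ε : Fin n → ℝ := fun i => if 0 ≤ x i * y i then 1 else -1 with hε
      have hx' := hsym x hx ε
        (fun i => by by_cases h : 0 ≤ x i * y i <;> simp [hε, h]) 1
      have hy' := hy _ hx'
      simp only [PiLp.inner_apply, RCLike.inner_apply, conj_trivial,
        WithLp.equiv_symm_apply, PiLp.toLp_apply, Equiv.Perm.coe_one, id_eq] at hy'
      have heq : ∀ i, c i * |x i| = ε i * x i * y i := by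
        intro i
        simp only [hε, hcdef]
        by_cases h : 0 ≤ x i * y i
        · rw [if_pos h, one_mul, mul_comm (|y i|) (|x i|), ← abs_mul, abs_of_nonneg h]
        · rw [if_neg h, mul_comm (|y i|) (|x i|), ← abs_mul, abs_of_neg (not_le.mp h)]
          ring
      calc ∑ i, c i * |x i| = ∑ i, ε i * x i * y i := by
            exact Finset.sum_congr rfl fun i _ => heq i
        _ ≤ 1 := (Finset.sum_congr rfl fun i _ => by ring).trans_le hy'
    have hvol : volume K ≤ ENNReal.ofReal ((∏ i, c i)⁻¹ * B) := by
      rw [hB, ← euclid_scaled_l1_volume n c hc]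
      exact measure_mono hsub
    have hVle : V ≤ (∏ i, c i)⁻¹ * B :=
      ENNReal.toReal_le_of_le_ofReal (by positivity) hvol
    have : V ≤ B / ∏ i, c i := by rwa [div_eq_inv_mul]
    calc V * ∏ i, |y i| = V * ∏ i, c i := rfl
      _ ≤ B := (le_div_iff₀ hprodpos).mp this
  -- conclude
  have hsup : sSup ((fun y : EuclideanSpace ℝ (Fin n) => ∏ i, |y i|) '' polarSet K) ≤ B / V := by
    refine Real.sSup_le ?_ (by positivity)
    rintro a ⟨y, hy, rfl⟩
    rw [le_div_iff₀ hVpos, mul_comm]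
    exact key y hy
  calc V * sSup ((fun y : EuclideanSpace ℝ (Fin n) => ∏ i, |y i|) '' polarSet K)
      ≤ V * (B / V) := mul_le_mul_of_nonneg_left hsup hVpos.le
    _ = B := by field_simp
end

section
/- Let q ∈ (1,2] and K a symmetric convex body in ℝⁿ. Assuming the Blaschke–Santaló inequality |K|·|K°| ≤ |B₂ⁿ|², one has (q−1)^{1/(q−1)} |K| · (∫_{K°} |x|^{n(q−2)} dx)^{1/(q−1)} ≤ |B₂ⁿ|^{q/(q−1)}. -/
open MeasureTheory Real
open scoped RealInnerProductSpace

/-- Let `q ∈ (1,2]` and `K` a symmetric convex body in `ℝⁿ`. Assuming the Blaschke–Santaló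
inequality `|K|·|K°| ≤ |B₂ⁿ|²`, one has
`(q−1)^{1/(q−1)} |K| · (∫_{K°} |x|^{n(q−2)} dx)^{1/(q−1)} ≤ |B₂ⁿ|^{q/(q−1)}`. -/
theorem rot_inv_bs_consequence (n : ℕ) (q : ℝ) (hq1 : 1 < q) (hq2 : q ≤ 2)
    (K : Set (EuclideanSpace ℝ (Fin n)))
    (hconv : Convex ℝ K) (hcomp : IsCompact K) (hint : (interior K).Nonempty)
    (hsym : ∀ x ∈ K, -x ∈ K)
    (hBS : (volume K).toReal * (volume (polarSet K)).toReal
        ≤ (volume (Metric.closedBall (0 : EuclideanSpace ℝ (Fin n)) 1)).toReal ^ 2) :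
    (q - 1) ^ (1 / (q - 1)) * (volume K).toReal *
        (∫ x in polarSet K, ‖x‖ ^ ((n : ℝ) * (q - 2))) ^ (1 / (q - 1))
      ≤ (volume (Metric.closedBall (0 : EuclideanSpace ℝ (Fin n)) 1)).toReal ^ (q / (q - 1)) := by
  classical
  have hq0 : (0:ℝ) < q - 1 := by linarith
  set Kp := polarSet K with hKp
  set α : ℝ := (n : ℝ) * (q - 2) with hα
  -- polar set is closed, hence measurable
  have hKpclosed : IsClosed Kp := by
    have hset : Kp = ⋂ x ∈ K, {y : EuclideanSpace ℝ (Fin n) | ⟪x, y⟫ ≤ 1} := by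
      ext y
      simp only [hKp, polarSet, Set.mem_setOf_eq, Set.mem_iInter]
    rw [hset]
    exact isClosed_biInter fun x _ =>
      isClosed_le (continuous_const.inner continuous_id) continuous_const
  have hKpmeas : MeasurableSet Kp := hKpclosed.measurableSet
  -- 0 is in the interior of K
  obtain ⟨x₀, hx₀⟩ := hint
  obtain ⟨ε, hε, hεball⟩ := Metric.isOpen_iff.mp isOpen_interior x₀ hx₀
  have hx₀' : -x₀ ∈ interior K := by
    apply mem_interior.mpr
    refine ⟨Metric.ball (-x₀) ε, ?_, Metric.isOpen_ball, Metric.mem_ball_self hε⟩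
    intro y hy
    have h1 : -y ∈ Metric.ball x₀ ε := by
      rw [Metric.mem_ball] at hy ⊢
      rw [← dist_neg_neg y (-x₀)] at hy
      simpa using hy
    have h2 : -y ∈ K := interior_subset (hεball h1)
    simpa using hsym _ h2
  have h0K : (0 : EuclideanSpace ℝ (Fin n)) ∈ interior K := by
    have hseg : segment ℝ x₀ (-x₀) ⊆ interior K :=
      (hconv.interior).segment_subset hx₀ hx₀'
    apply hseg
    exact ⟨1/2, 1/2, by norm_num, by norm_num, by norm_num, by module⟩
  obtain ⟨r, hrpos, hrball⟩ := Metric.isOpen_iff.mp isOpen_interior 0 h0K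
  have hballK : Metric.ball (0 : EuclideanSpace ℝ (Fin n)) r ⊆ K := hrball.trans interior_subset
  -- bound for the polar set: Kp ⊆ closedBall 0 (2/r)
  have hKpsub : Kp ⊆ Metric.closedBall (0 : EuclideanSpace ℝ (Fin n)) (2 / r) := by
    intro y hy
    rw [Metric.mem_closedBall, dist_zero_right]
    rcases eq_or_ne y 0 with rfl | hy0
    · simp; positivity
    · have hyn : (0:ℝ) < ‖y‖ := norm_pos_iff.mpr hy0
      set x : EuclideanSpace ℝ (Fin n) := (r / 2) • (‖y‖⁻¹ • y) with hxdef
      have hxball : x ∈ Metric.ball (0 : EuclideanSpace ℝ (Fin n)) r := by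
        rw [Metric.mem_ball, dist_zero_right, hxdef, norm_smul, norm_smul,
          norm_inv, norm_norm]
        rw [Real.norm_eq_abs, abs_of_pos (by positivity : (0:ℝ) < r / 2)]
        rw [inv_mul_cancel₀ hyn.ne', mul_one]
        linarith
      have hineq := hy x (hballK hxball)
      rw [hxdef, real_inner_smul_left, real_inner_smul_left,
        real_inner_self_eq_norm_sq] at hineq
      have : r / 2 * (‖y‖⁻¹ * ‖y‖ ^ 2) = r / 2 * ‖y‖ := by
        field_simp
      rw [this] at hineq
      rw [le_div_iff₀ hrpos]
      nlinarith
  -- volumes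
  have hKpfin : volume Kp ≠ ⊤ :=
    ((measure_mono hKpsub).trans_lt measure_closedBall_lt_top).ne
  have hKfin : volume K ≠ ⊤ := hcomp.measure_lt_top.ne
  have hωfin : volume (Metric.closedBall (0 : EuclideanSpace ℝ (Fin n)) 1) ≠ ⊤ := measure_closedBall_lt_top.ne
  set ω : ℝ := (volume (Metric.closedBall (0 : EuclideanSpace ℝ (Fin n)) 1)).toReal with hωdef
  set V : ℝ := (volume K).toReal with hVdef
  set W : ℝ := (volume Kp).toReal with hWdef
  have hωpos : 0 < ω :=
    ENNReal.toReal_pos (Metric.measure_closedBall_pos volume _ one_pos).ne' hωfin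
  have hVnn : 0 ≤ V := ENNReal.toReal_nonneg
  have hWnn : 0 ≤ W := ENNReal.toReal_nonneg
  -- W > 0 : the polar set contains a small ball
  obtain ⟨R, hR, hKR⟩ := hcomp.isBounded.subset_closedBall_lt 0 0
  have hRpolar : Metric.closedBall (0 : EuclideanSpace ℝ (Fin n)) R⁻¹ ⊆ Kp := by
    intro y hy x hx
    have h1 : ‖x‖ ≤ R := by
      have := hKR hx; rwa [Metric.mem_closedBall, dist_zero_right] at this
    have h2 : ‖y‖ ≤ R⁻¹ := by
      rwa [Metric.mem_closedBall, dist_zero_right] at hy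
    calc ⟪x, y⟫ ≤ ‖x‖ * ‖y‖ := real_inner_le_norm x y
      _ ≤ R * R⁻¹ := by
          apply mul_le_mul h1 h2 (norm_nonneg _) hR.le
      _ = 1 := mul_inv_cancel₀ hR.ne'
  have hWpos : 0 < W := by
    apply ENNReal.toReal_pos _ hKpfin
    exact ((Metric.measure_closedBall_pos volume _ (by positivity)).trans_le
      (measure_mono hRpolar)).ne'
  set I : ℝ := ∫ x in Kp, ‖x‖ ^ α with hIdef
  have hInn : 0 ≤ I := by
    apply integral_nonneg
    intro x
    exact Real.rpow_nonneg (norm_nonneg _) _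
  -- the key inequality
  have key : (q - 1) * I ≤ W ^ (q - 1) * ω ^ (2 - q) := by
    have hnn : (0:EuclideanSpace ℝ (Fin n) → ℝ) ≤ᵐ[volume.restrict Kp]
        fun x : EuclideanSpace ℝ (Fin n) => ‖x‖ ^ α :=
      Filter.Eventually.of_forall fun x => by
        simpa using Real.rpow_nonneg (norm_nonneg x) α
    have hfm : Measurable fun x : EuclideanSpace ℝ (Fin n) => ‖x‖ ^ α :=
      measurable_norm.pow measurable_const
    by_cases hα0 : α = 0
    · -- degenerate case : q = 2 or n = 0
      have hI : I = W := by
        rw [hIdef, hα0]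
        simp [Real.rpow_zero]
        rfl
      rw [hI]
      by_cases hq2' : q = 2
      · subst hq2'
        norm_num
      · -- then n = 0 ; everything lives in a point
        have hq2n : q - 2 ≠ 0 := fun h => hq2' (by linarith)
        have hn0 : n = 0 := by
          rcases mul_eq_zero.mp hα0 with h | h
          · exact_mod_cast h
          · exact absurd h hq2n
        subst hn0
        have hWω : W ≤ ω := by
          apply ENNReal.toReal_mono hωfin
          apply measure_mono
          intro y _
          rw [Metric.mem_closedBall, dist_zero_right]
          have : ‖y‖ = 0 := by
            simp [EuclideanSpace.norm_eq]
          rw [this]; norm_num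
        have h1 : (q-1) * W ≤ W := by nlinarith
        have h2 : W = W ^ (q-1) * W ^ (2-q) := by
          rw [← Real.rpow_add hWpos]
          norm_num
        have h3 : W ^ (q-1) * W ^ (2-q) ≤ W ^ (q-1) * ω ^ (2-q) := by
          apply mul_le_mul_of_nonneg_left _ (by positivity)
          exact Real.rpow_le_rpow hWnn hWω (by linarith)
        linarith
    · -- main case
      have hq2' : q < 2 := lt_of_le_of_ne hq2 fun h => hα0 (by rw [hα, h]; ring)
      have hncast : (0:ℝ) < (n:ℝ) := by
        rcases Nat.eq_zero_or_pos n with h | h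
        · exfalso; apply hα0; rw [hα, h]; norm_num
        · exact_mod_cast h
      have hαneg : α < 0 := mul_neg_of_pos_of_neg hncast (by linarith)
      set s : ℝ := 1/(q-2) with hsdef
      have hq2n : q - 2 < 0 := by linarith
      have hs : s < -1 := by
        rw [hsdef, div_lt_iff_of_neg hq2n]
        linarith
      set T : ℝ := (W/ω) ^ (q-2) with hTdef
      have hTpos : 0 < T := Real.rpow_pos_of_pos (div_pos hWpos hωpos) _
      -- express the integral as a Lebesgue integral
      have hIlint : I = (∫⁻ x in Kp, ENNReal.ofReal (‖x‖ ^ α)).toReal := by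
        rw [hIdef, integral_eq_lintegral_of_nonneg_ae hnn hfm.aestronglyMeasurable]
      have hlayer : (∫⁻ x in Kp, ENNReal.ofReal (‖x‖ ^ α))
          = ∫⁻ t in Set.Ioi (0:ℝ), (volume.restrict Kp) {a | t ≤ ‖a‖ ^ α} :=
        lintegral_eq_lintegral_meas_le _ hnn hfm.aemeasurable
      have hmeas_level : ∀ t : ℝ, MeasurableSet {a : EuclideanSpace ℝ (Fin n) | t ≤ ‖a‖ ^ α} :=
        fun t => measurableSet_le measurable_const hfm
      -- first piece
      have hbound1 : (∫⁻ t in Set.Ioc (0:ℝ) T, (volume.restrict Kp) {a | t ≤ ‖a‖ ^ α})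
          ≤ ENNReal.ofReal (W * T) := by
        calc (∫⁻ t in Set.Ioc (0:ℝ) T, (volume.restrict Kp) {a | t ≤ ‖a‖ ^ α})
            ≤ ∫⁻ _t in Set.Ioc (0:ℝ) T, volume Kp := by
              apply lintegral_mono fun t => ?_
              rw [Measure.restrict_apply (hmeas_level t)]
              exact measure_mono Set.inter_subset_right
          _ = volume Kp * volume (Set.Ioc (0:ℝ) T) := setLIntegral_const _ _
          _ = ENNReal.ofReal (W * T) := by
              rw [Real.volume_Ioc, sub_zero, ← ENNReal.ofReal_toReal hKpfin, ← hWdef,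
                ← ENNReal.ofReal_mul hWnn]
      -- second piece
      have hptwise : ∀ t ∈ Set.Ioi T, (volume.restrict Kp) {a | t ≤ ‖a‖ ^ α}
          ≤ ENNReal.ofReal (ω * t ^ s) := by
        intro t ht
        have htT : T < t := ht
        have htpos : 0 < t := hTpos.trans htT
        have hsub : {a : EuclideanSpace ℝ (Fin n) | t ≤ ‖a‖ ^ α}
            ⊆ Metric.closedBall 0 (t ^ α⁻¹) := by
          intro a ha
          have ha' : t ≤ ‖a‖ ^ α := ha
          have hanz : a ≠ 0 := by
            rintro rfl
            rw [norm_zero, Real.zero_rpow hα0] at ha'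
            linarith
          have hapos : 0 < ‖a‖ := norm_pos_iff.mpr hanz
          rw [Metric.mem_closedBall, dist_zero_right]
          have h1 : (‖a‖ ^ α) ^ α⁻¹ ≤ t ^ α⁻¹ :=
            Real.rpow_le_rpow_of_nonpos htpos ha' (inv_nonpos.mpr hαneg.le)
          rwa [Real.rpow_rpow_inv (norm_nonneg a) hα0] at h1
        calc (volume.restrict Kp) {a | t ≤ ‖a‖ ^ α}
            ≤ volume (Metric.closedBall (0 : EuclideanSpace ℝ (Fin n)) (t ^ α⁻¹)) := by
              rw [Measure.restrict_apply (hmeas_level t)]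
              exact measure_mono (Set.inter_subset_left.trans hsub)
          _ = ENNReal.ofReal ((t ^ α⁻¹) ^ n) * volume (Metric.closedBall (0 : EuclideanSpace ℝ (Fin n)) 1) := by
              rw [Measure.addHaar_closedBall' volume _ (by positivity)]
              congr 2
              rw [finrank_euclideanSpace_fin]
          _ = ENNReal.ofReal (ω * t ^ s) := by
              rw [← ENNReal.ofReal_toReal hωfin, ← hωdef, ← ENNReal.ofReal_mul (by positivity)]
              congr 1
              have hexp : α⁻¹ * (n:ℝ) = s := by
                rw [hα, hsdef]
                rw [mul_comm]
                rw [mul_inv]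
                field_simp [hq2n.ne]
              rw [← Real.rpow_natCast (t ^ α⁻¹) n, ← Real.rpow_mul htpos.le, hexp, mul_comm]
      have hInt2 : IntegrableOn (fun t : ℝ => ω * t ^ s) (Set.Ioi T) := by
        exact (integrableOn_Ioi_rpow_of_lt hs hTpos).const_mul ω
      have hbound2 : (∫⁻ t in Set.Ioi T, (volume.restrict Kp) {a | t ≤ ‖a‖ ^ α})
          ≤ ENNReal.ofReal (ω * (-T ^ (s+1) / (s+1))) := by
        calc (∫⁻ t in Set.Ioi T, (volume.restrict Kp) {a | t ≤ ‖a‖ ^ α})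
            ≤ ∫⁻ t in Set.Ioi T, ENNReal.ofReal (ω * t ^ s) := by
              apply setLIntegral_mono' measurableSet_Ioi hptwise
          _ = ENNReal.ofReal (∫ t in Set.Ioi T, ω * t ^ s) := by
              rw [ofReal_integral_eq_lintegral_ofReal hInt2]
              apply Filter.eventually_of_mem (self_mem_ae_restrict measurableSet_Ioi)
              intro t ht
              have : (0:ℝ) < t := hTpos.trans ht
              positivity
          _ = ENNReal.ofReal (ω * (-T ^ (s+1) / (s+1))) := by
              rw [integral_const_mul, integral_Ioi_rpow_of_lt hs hTpos]
      -- combine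
      have hs1neg : s + 1 < 0 := by linarith
      have hTsnn : 0 ≤ -T ^ (s+1) / (s+1) := by
        apply le_of_lt
        apply div_pos_of_neg_of_neg _ hs1neg
        have : 0 < T ^ (s+1) := Real.rpow_pos_of_pos hTpos _
        linarith
      have hsum : (∫⁻ x in Kp, ENNReal.ofReal (‖x‖ ^ α))
          ≤ ENNReal.ofReal (W * T + ω * (-T ^ (s+1) / (s+1))) := by
        rw [hlayer, ← Set.Ioc_union_Ioi_eq_Ioi hTpos.le,
          lintegral_union measurableSet_Ioi Set.Ioc_disjoint_Ioi_same,
          ENNReal.ofReal_add (by positivity) (by positivity)]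
        exact add_le_add hbound1 hbound2
      have hIle : I ≤ W * T + ω * (-T ^ (s+1) / (s+1)) := by
        rw [hIlint]
        apply ENNReal.toReal_le_of_le_ofReal (by positivity) hsum
      -- algebraic identification of the bound
      have e1 : T = W^(q-2) * ω^(2-q) := by
        rw [hTdef, Real.div_rpow hWnn hωpos.le, div_eq_mul_inv, ← Real.rpow_neg hωpos.le,
          neg_sub]
      have e2 : W * T = W^(q-1) * ω^(2-q) := by
        rw [e1, ← mul_assoc]
        congr 1
        nth_rewrite 1 [← Real.rpow_one W]
        rw [← Real.rpow_add hWpos]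
        congr 1
        ring
      have e3 : ω * T^(s+1) = W^(q-1) * ω^(2-q) := by
        have hT1 : T^(s+1) = (W/ω)^(q-1) := by
          rw [hTdef, ← Real.rpow_mul (div_pos hWpos hωpos).le]
          congr 1
          rw [hsdef]
          field_simp [hq2n.ne]
          try ring
        have hω1 : ω^(2-q) = ω / ω^(q-1) := by
          rw [show (2-q) = 1 - (q-1) by ring, Real.rpow_sub hωpos, Real.rpow_one]
        rw [hT1, Real.div_rpow hWnn hωpos.le, hω1]
        ring
      have e4 : -1/(s+1) = (2-q)/(q-1) := by
        rw [hsdef]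
        rw [show (1:ℝ)/(q-2) + 1 = (q-1)/(q-2) by field_simp [hq2n.ne]; ring]
        rw [div_div_eq_mul_div]
        rw [show (-1:ℝ) * (q-2) = 2 - q by ring]
      have etot : W * T + ω * (-T ^ (s+1) / (s+1)) = W^(q-1) * ω^(2-q) / (q-1) := by
        have : ω * (-T ^ (s+1) / (s+1)) = (ω * T^(s+1)) * (-1/(s+1)) := by ring
        rw [this, e2, e3, e4]
        field_simp
        ring
      rw [etot] at hIle
      calc (q-1) * I ≤ (q-1) * (W^(q-1) * ω^(2-q) / (q-1)) :=
            mul_le_mul_of_nonneg_left hIle hq0.le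
        _ = W^(q-1) * ω^(2-q) := by field_simp
  -- final combination
  have hβ : 0 < 1 / (q - 1) := by positivity
  have hIW : I ≤ (W ^ (q - 1) * ω ^ (2 - q)) / (q - 1) := by
    rw [le_div_iff₀ hq0]; linarith
  have hAnn : 0 ≤ W ^ (q - 1) * ω ^ (2 - q) := by positivity
  have step1 : I ^ (1/(q-1)) ≤ ((W ^ (q - 1) * ω ^ (2 - q)) / (q - 1)) ^ (1/(q-1)) :=
    Real.rpow_le_rpow hInn hIW hβ.le
  have step2 : ((W ^ (q - 1) * ω ^ (2 - q)) / (q - 1)) ^ (1/(q-1))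
      = (W * ω ^ ((2 - q)/(q-1))) / (q - 1) ^ (1/(q-1)) := by
    rw [Real.div_rpow hAnn hq0.le, Real.mul_rpow (by positivity) (by positivity),
      ← Real.rpow_mul hWnn, ← Real.rpow_mul hωpos.le]
    rw [mul_one_div, div_self hq0.ne', Real.rpow_one, mul_one_div]
  have hpow_pos : (0:ℝ) < (q - 1) ^ (1/(q-1)) := Real.rpow_pos_of_pos hq0 _
  calc (q - 1) ^ (1 / (q - 1)) * V * I ^ (1 / (q - 1))
      ≤ (q - 1) ^ (1 / (q - 1)) * V * ((W * ω ^ ((2 - q)/(q-1))) / (q - 1) ^ (1/(q-1))) := by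
        apply mul_le_mul_of_nonneg_left _ (by positivity)
        rw [step2] at step1; exact step1
    _ = V * W * ω ^ ((2 - q)/(q-1)) := by
        field_simp
    _ ≤ ω ^ 2 * ω ^ ((2 - q)/(q-1)) := by
        apply mul_le_mul_of_nonneg_right _ (by positivity)
        exact hBS
    _ = ω ^ (q / (q - 1)) := by
        rw [← Real.rpow_natCast ω 2, ← Real.rpow_add hωpos]
        congr 1
        field_simp
        ring
end

section
/- Let p > 1 and V : (0,∞)ⁿ → ℝ be C² and positively p-homogeneous. Then the following are equivalent: (1) for all a, b ∈ (0,∞)ⁿ, ⟨a, ∇V(b)⟩ ≥ p·V(a^{1/p} b^{(p−1)/p}) (coordinatewise powers and products); (2) the function x ↦ V(x₁^{1/p},…,xₙ^{1/p}) is concave on (0,∞)ⁿ. -/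
open Real

private lemma isOpen_posOrthant (n : ℕ) : IsOpen {x : Fin n → ℝ | ∀ i, 0 < x i} := by
  have h : {x : Fin n → ℝ | ∀ i, 0 < x i} = Set.pi Set.univ (fun _ => Set.Ioi 0) := by
    ext x; simp [Set.mem_pi]
  rw [h]
  exact isOpen_set_pi Set.finite_univ (fun i _ => isOpen_Ioi)

private lemma convex_posOrthant (n : ℕ) : Convex ℝ {x : Fin n → ℝ | ∀ i, 0 < x i} := by
  have h : {x : Fin n → ℝ | ∀ i, 0 < x i} = Set.pi Set.univ (fun _ => Set.Ioi 0) := by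
    ext x; simp [Set.mem_pi]
  rw [h]
  exact convex_pi (fun i _ => convex_Ioi 0)

private noncomputable def Lmap (n : ℕ) (p : ℝ) (x : Fin n → ℝ) : (Fin n → ℝ) →L[ℝ] (Fin n → ℝ) :=
  ContinuousLinearMap.pi fun i => (1 / p * x i ^ (1 / p - 1)) •
    (ContinuousLinearMap.proj i : (Fin n → ℝ) →L[ℝ] ℝ)

private lemma Lmap_apply (n : ℕ) (p : ℝ) (x y : Fin n → ℝ) (i : Fin n) :
    Lmap n p x y i = 1 / p * x i ^ (1 / p - 1) * y i := by
  simp [Lmap]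

private lemma hasFDerivAt_W (n : ℕ) (p : ℝ) (V : (Fin n → ℝ) → ℝ)
    (hC2 : ContDiffOn ℝ 2 V {x | ∀ i, 0 < x i})
    (x : Fin n → ℝ) (hx : ∀ i, 0 < x i) :
    HasFDerivAt (fun y : Fin n → ℝ => V (fun i => y i ^ (1 / p)))
      ((fderiv ℝ V (fun i => x i ^ (1 / p))).comp (Lmap n p x)) x := by
  have hφ : HasFDerivAt (fun y : Fin n → ℝ => (fun i => y i ^ (1 / p))) (Lmap n p x) x := by
    refine hasFDerivAt_pi.2 ?_
    intro i
    have h1 : HasDerivAt (fun s : ℝ => s ^ (1 / p)) (1 / p * x i ^ (1 / p - 1)) (x i) :=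
      Real.hasDerivAt_rpow_const (Or.inl (hx i).ne')
    exact h1.comp_hasFDerivAt x
      ((ContinuousLinearMap.proj i : (Fin n → ℝ) →L[ℝ] ℝ).hasFDerivAt)
  have hxS : (fun i => x i ^ (1 / p)) ∈ {x : Fin n → ℝ | ∀ i, 0 < x i} :=
    fun i => Real.rpow_pos_of_pos (hx i) _
  have hV : DifferentiableAt ℝ V (fun i => x i ^ (1 / p)) :=
    (hC2.contDiffAt ((isOpen_posOrthant n).mem_nhds hxS)).differentiableAt (by norm_num)
  exact hV.hasFDerivAt.comp x hφ

private lemma fderiv_W_apply (n : ℕ) (p : ℝ) (V : (Fin n → ℝ) → ℝ)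
    (hC2 : ContDiffOn ℝ 2 V {x | ∀ i, 0 < x i})
    (x : Fin n → ℝ) (hx : ∀ i, 0 < x i) (y : Fin n → ℝ) :
    fderiv ℝ (fun y : Fin n → ℝ => V (fun i => y i ^ (1 / p))) x y
      = 1 / p * fderiv ℝ V (fun i => x i ^ (1 / p)) (fun i => y i * x i ^ (1 / p - 1)) := by
  rw [(hasFDerivAt_W n p V hC2 x hx).fderiv]
  have h2 : Lmap n p x y = (1 / p) • (fun i => y i * x i ^ (1 / p - 1)) := by
    funext i
    rw [Lmap_apply]
    simp only [Pi.smul_apply, smul_eq_mul]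
    ring
  rw [ContinuousLinearMap.comp_apply, h2, map_smul, smul_eq_mul]

private lemma euler_generic {E : Type*} [NormedAddCommGroup E] [NormedSpace ℝ E]
    {W : E → ℝ} {W' : E →L[ℝ] ℝ} {x : E} (hW : HasFDerivAt W W' x)
    (h : ∀ᶠ t in nhds (1 : ℝ), W (t • x) = t * W x) : W' x = W x := by
  have hline : HasDerivAt (fun t : ℝ => t • x) x 1 := by
    simpa using (hasDerivAt_id (1 : ℝ)).smul_const x
  have hW1 : HasFDerivAt W W' ((fun t : ℝ => t • x) 1) := by simpa using hW
  have h1 : HasDerivAt (fun t : ℝ => W (t • x)) (W' x) 1 := by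
    exact hW1.comp_hasDerivAt 1 hline
  have h2 : HasDerivAt (fun t : ℝ => t * W x) (W' x) 1 :=
    h1.congr_of_eventuallyEq (h.mono fun t ht => ht.symm)
  have h3 : HasDerivAt (fun t : ℝ => t * W x) (W x) 1 := by
    simpa using (hasDerivAt_id (1 : ℝ)).mul_const (W x)
  exact h2.unique h3

private lemma concave_first_order {E : Type*} [NormedAddCommGroup E] [NormedSpace ℝ E]
    {s : Set E} {f : E → ℝ} {f' : E →L[ℝ] ℝ} {x y : E}
    (hc : ConcaveOn ℝ s f) (hx : x ∈ s) (hy : y ∈ s) (hf : HasFDerivAt f f' x) :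
    f y ≤ f x + f' (y - x) := by
  set g : ℝ → ℝ := fun t => f (x + t • (y - x)) with hg_def
  have hline : HasDerivAt (fun t : ℝ => x + t • (y - x)) (y - x) 0 := by
    simpa using ((hasDerivAt_id (0 : ℝ)).smul_const (y - x)).const_add x
  have hf0 : HasFDerivAt f f' ((fun t : ℝ => x + t • (y - x)) 0) := by simpa using hf
  have hg : HasDerivAt g (f' (y - x)) 0 := by
    exact hf0.comp_hasDerivAt 0 hline
  have hkey : f y - f x ≤ f' (y - x) := by
    have hslope : Filter.Tendsto (slope g 0) (nhdsWithin 0 (Set.Ioi 0)) (nhds (f' (y - x))) := by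
      exact (hasDerivWithinAt_iff_tendsto_slope' (s := Set.Ioi (0:ℝ)) (f := g)
        (x := (0:ℝ)) (f' := f' (y - x)) (by simp)).1 (hg.hasDerivWithinAt)
    refine ge_of_tendsto hslope ?_
    filter_upwards [Ioc_mem_nhdsGT_of_mem (Set.mem_Ico.2 ⟨le_refl (0:ℝ), zero_lt_one⟩)]
      with t ht
    have ht0 : (0:ℝ) < t := ht.1
    have hconc := hc.2 hx hy (show (0:ℝ) ≤ 1 - t by linarith [ht.2]) ht0.le
      (by ring : (1 - t) + t = 1)
    have hzeq : (1 - t) • x + t • y = x + t • (y - x) := by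
      rw [smul_sub, sub_smul, one_smul]; abel
    rw [hzeq] at hconc
    have hg0 : g 0 = f x := by simp [hg_def]
    have hconc' : f x + t * (f y - f x) ≤ g t := by
      have : (1 - t) * f x + t * f y ≤ g t := by
        simpa [smul_eq_mul, hg_def] using hconc
      linarith
    have hsl : slope g 0 t = (g t - f x) / t := by
      rw [slope_def_field, hg0, sub_zero]
    rw [hsl, le_div_iff₀ ht0]
    linarith
  linarith

private lemma euler_W (n : ℕ) (p : ℝ) (hp : 0 < p) (V : (Fin n → ℝ) → ℝ)
    (hC2 : ContDiffOn ℝ 2 V {x | ∀ i, 0 < x i})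
    (hhom : ∀ t : ℝ, 0 < t → ∀ x : Fin n → ℝ, (∀ i, 0 < x i) → V (t • x) = t ^ p * V x)
    (x : Fin n → ℝ) (hx : ∀ i, 0 < x i) :
    fderiv ℝ (fun y : Fin n → ℝ => V (fun i => y i ^ (1 / p))) x x
      = V (fun i => x i ^ (1 / p)) := by
  rw [(hasFDerivAt_W n p V hC2 x hx).fderiv]
  refine euler_generic (hasFDerivAt_W n p V hC2 x hx) ?_
  filter_upwards [eventually_gt_nhds (zero_lt_one)] with t ht
  have hxS : ∀ i, 0 < x i ^ (1 / p) := fun i => Real.rpow_pos_of_pos (hx i) _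
  have h1 : (fun i => (t • x) i ^ (1 / p)) = (t ^ (1 / p)) • (fun i => x i ^ (1 / p)) := by
    funext i
    simp only [Pi.smul_apply, smul_eq_mul]
    exact Real.mul_rpow ht.le (hx i).le
  rw [h1, hhom _ (Real.rpow_pos_of_pos ht _) _ hxS]
  rw [← Real.rpow_mul ht.le, one_div, inv_mul_cancel₀ (ne_of_gt hp), Real.rpow_one]

/-- Let `p > 1` and `V : (0,∞)ⁿ → ℝ` be C² and positively `p`-homogeneous. Then the following
are equivalent:
(1) for all `a, b ∈ (0,∞)ⁿ`, `⟨a, ∇V(b)⟩ ≥ p·V(a^{1/p} b^{(p−1)/p})` (coordinatewise);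
(2) `x ↦ V(x₁^{1/p},…,xₙ^{1/p})` is concave on `(0,∞)ⁿ`. -/
theorem homogeneous_gradient_ineq_iff_concave (n : ℕ) (p : ℝ) (hp : 1 < p)
    (V : (Fin n → ℝ) → ℝ)
    (hC2 : ContDiffOn ℝ 2 V {x | ∀ i, 0 < x i})
    (hhom : ∀ t : ℝ, 0 < t → ∀ x : Fin n → ℝ, (∀ i, 0 < x i) → V (t • x) = t ^ p * V x) :
    (∀ a b : Fin n → ℝ, (∀ i, 0 < a i) → (∀ i, 0 < b i) →
        p * V (fun i => a i ^ (1 / p) * b i ^ ((p - 1) / p)) ≤ fderiv ℝ V b a)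
      ↔ ConcaveOn ℝ {x : Fin n → ℝ | ∀ i, 0 < x i}
          (fun x => V (fun i => x i ^ (1 / p))) := by
  have hp0 : (0:ℝ) < p := zero_lt_one.trans hp
  have hpne : p ≠ 0 := ne_of_gt hp0
  constructor
  · intro h
    have h' : ∀ x y : Fin n → ℝ, (∀ i, 0 < x i) → (∀ i, 0 < y i) →
        V (fun i => y i ^ (1 / p))
          ≤ fderiv ℝ (fun z : Fin n → ℝ => V (fun i => z i ^ (1 / p))) x y := by
      intro x y hx hy
      have ha : ∀ i, 0 < y i * x i ^ (1 / p - 1) :=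
        fun i => mul_pos (hy i) (Real.rpow_pos_of_pos (hx i) _)
      have hb : ∀ i, 0 < x i ^ (1 / p) := fun i => Real.rpow_pos_of_pos (hx i) _
      have key := h (fun i => y i * x i ^ (1 / p - 1)) (fun i => x i ^ (1 / p)) ha hb
      have harg : (fun i => (y i * x i ^ (1 / p - 1)) ^ (1 / p)
            * (x i ^ (1 / p)) ^ ((p - 1) / p)) = fun i => y i ^ (1 / p) := by
        funext i
        rw [Real.mul_rpow (hy i).le (Real.rpow_pos_of_pos (hx i) _).le,
          ← Real.rpow_mul (hx i).le, ← Real.rpow_mul (hx i).le,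
          mul_assoc, ← Real.rpow_add (hx i)]
        have he : (1 / p - 1) * (1 / p) + 1 / p * ((p - 1) / p) = 0 := by
          field_simp
          ring
        rw [he, Real.rpow_zero, mul_one]
      rw [harg] at key
      rw [fderiv_W_apply n p V hC2 x hx y]
      calc V (fun i => y i ^ (1 / p))
          = 1 / p * (p * V (fun i => y i ^ (1 / p))) := by field_simp
        _ ≤ 1 / p * fderiv ℝ V (fun i => x i ^ (1 / p))
              (fun i => y i * x i ^ (1 / p - 1)) :=
            mul_le_mul_of_nonneg_left key (by positivity)
    refine ⟨convex_posOrthant n, ?_⟩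
    intro x hx y hy s t hs ht hst
    rcases eq_or_lt_of_le hs with hs0 | hs0
    · have ht1 : t = 1 := by linarith
      simp [← hs0, ht1]
    rcases eq_or_lt_of_le ht with ht0 | ht0
    · have hs1 : s = 1 := by linarith
      simp [← ht0, hs1]
    have hz : ∀ i, 0 < (s • x + t • y) i := by
      intro i
      have hxi : 0 < x i := hx i
      have hyi : 0 < y i := hy i
      simp only [Pi.add_apply, Pi.smul_apply, smul_eq_mul]
      positivity
    have e1 := h' (s • x + t • y) x hz hx
    have e2 := h' (s • x + t • y) y hz hy
    have heuler := euler_W n p hp0 V hC2 hhom (s • x + t • y) hz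
    have hlin : fderiv ℝ (fun z : Fin n → ℝ => V (fun i => z i ^ (1 / p)))
          (s • x + t • y) (s • x + t • y)
        = s * fderiv ℝ (fun z : Fin n → ℝ => V (fun i => z i ^ (1 / p))) (s • x + t • y) x
          + t * fderiv ℝ (fun z : Fin n → ℝ => V (fun i => z i ^ (1 / p))) (s • x + t • y) y := by
      rw [map_add, map_smul, map_smul, smul_eq_mul, smul_eq_mul]
    simp only [smul_eq_mul]
    calc s * V (fun i => x i ^ (1 / p)) + t * V (fun i => y i ^ (1 / p))
        ≤ s * fderiv ℝ (fun z : Fin n → ℝ => V (fun i => z i ^ (1 / p))) (s • x + t • y) x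
          + t * fderiv ℝ (fun z : Fin n → ℝ => V (fun i => z i ^ (1 / p))) (s • x + t • y) y :=
          add_le_add (mul_le_mul_of_nonneg_left e1 hs0.le) (mul_le_mul_of_nonneg_left e2 ht0.le)
      _ = V (fun i => (s • x + t • y) i ^ (1 / p)) := by rw [← hlin, heuler]
  · intro hconc a b ha hb
    set x : Fin n → ℝ := fun i => b i ^ p with hx_def
    set y : Fin n → ℝ := fun i => a i * b i ^ (p - 1) with hy_def
    have hx : ∀ i, 0 < x i := fun i => Real.rpow_pos_of_pos (hb i) _
    have hy : ∀ i, 0 < y i := fun i => mul_pos (ha i) (Real.rpow_pos_of_pos (hb i) _)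
    have hxS : x ∈ {x : Fin n → ℝ | ∀ i, 0 < x i} := hx
    have hyS : y ∈ {x : Fin n → ℝ | ∀ i, 0 < x i} := hy
    have hD := hasFDerivAt_W n p V hC2 x hx
    have hfo := concave_first_order hconc hxS hyS hD.differentiableAt.hasFDerivAt
    rw [map_sub, euler_W n p hp0 V hC2 hhom x hx] at hfo
    -- hfo : W y ≤ W x + (fderiv W x y - W x)
    have hfo' : V (fun i => y i ^ (1 / p))
        ≤ fderiv ℝ (fun z : Fin n → ℝ => V (fun i => z i ^ (1 / p))) x y := by linarith
    rw [fderiv_W_apply n p V hC2 x hx y] at hfo'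
    have hphix : (fun i => x i ^ (1 / p)) = b := by
      funext i
      rw [hx_def, ← Real.rpow_mul (hb i).le, mul_one_div_cancel hpne, Real.rpow_one]
    have harg2 : (fun i => y i * x i ^ (1 / p - 1)) = a := by
      funext i
      rw [hy_def, hx_def, ← Real.rpow_mul (hb i).le, mul_assoc, ← Real.rpow_add (hb i)]
      have he : (p - 1) + p * (1 / p - 1) = 0 := by field_simp; ring
      rw [he, Real.rpow_zero, mul_one]
    have hWy : V (fun i => y i ^ (1 / p))
        = V (fun i => a i ^ (1 / p) * b i ^ ((p - 1) / p)) := by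
      congr 1
      funext i
      rw [hy_def, Real.mul_rpow (ha i).le (Real.rpow_pos_of_pos (hb i) _).le,
        ← Real.rpow_mul (hb i).le, mul_one_div]
    rw [hphix, harg2, hWy] at hfo'
    calc p * V (fun i => a i ^ (1 / p) * b i ^ ((p - 1) / p))
        ≤ p * (1 / p * fderiv ℝ V b a) := mul_le_mul_of_nonneg_left hfo' hp0.le
      _ = fderiv ℝ V b a := by field_simp
end

section
/- Let p > 1 and r ∈ (1, p]. Then the function x ↦ (1/p)|x^{1/p}|_r^p = (1/p)(∑_{i=1}^n x_i^{r/p})^{p/r} is concave on (0,∞)ⁿ. Equivalently, V(x) = |x|_r^p/p satisfies the concavity hypothesis that x ↦ V(x₁^{1/p},…,xₙ^{1/p}) is concave on the positive orthant. -/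
open Real

open Finset in
/-- Weighted Hölder step: `∑ aᵢˢ ≤ (∑ cᵢˢ)^{1-s} (∑ aᵢ cᵢ^{s-1})^s` for `0 ≤ a ≤ c`, `0 < s ≤ 1`. -/
lemma aux_step {n : ℕ} (s : ℝ) (hs0 : 0 < s) (hs1 : s ≤ 1) (a c : Fin n → ℝ)
    (ha : ∀ i, 0 ≤ a i) (hc : ∀ i, 0 ≤ c i) (hac : ∀ i, a i ≤ c i) :
    ∑ i, a i ^ s ≤ (∑ i, c i ^ s) ^ (1 - s) * (∑ i, a i * c i ^ (s - 1)) ^ s := by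
  have hq : 1 ≤ 1 / s := (le_div_iff₀ hs0).2 (by linarith)
  have key := inner_le_weight_mul_Lp_of_nonneg (Finset.univ : Finset (Fin n)) hq
      (fun i => c i ^ s) (fun i => (a i / c i) ^ s)
      (fun i => rpow_nonneg (hc i) _) (fun i => rpow_nonneg (div_nonneg (ha i) (hc i)) _)
  have hinv : (1 / s)⁻¹ = s := by rw [one_div, inv_inv]
  rw [hinv] at key
  have h1 : ∀ i, c i ^ s * (a i / c i) ^ s = a i ^ s := by
    intro i
    rcases eq_or_lt_of_le (hc i) with h | h
    · have ha0 : a i = 0 := le_antisymm (h ▸ hac i) (ha i)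
      simp [← h, ha0, zero_rpow hs0.ne']
    · rw [← mul_rpow (hc i) (div_nonneg (ha i) (hc i)), mul_div_cancel₀ _ h.ne']
  have h2 : ∀ i, c i ^ s * ((a i / c i) ^ s) ^ (1 / s) = a i * c i ^ (s - 1) := by
    intro i
    rcases eq_or_lt_of_le (hc i) with h | h
    · have ha0 : a i = 0 := le_antisymm (h ▸ hac i) (ha i)
      simp [← h, ha0, zero_rpow hs0.ne']
    · rw [← Real.rpow_mul (div_nonneg (ha i) h.le), mul_one_div_cancel hs0.ne', rpow_one,
        rpow_sub_one h.ne']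
      ring
  calc ∑ i, a i ^ s = ∑ i, c i ^ s * (a i / c i) ^ s :=
        (Finset.sum_congr rfl fun i _ => (h1 i)).symm
    _ ≤ (∑ i, c i ^ s) ^ (1 - s) * (∑ i, c i ^ s * ((a i / c i) ^ s) ^ (1/s)) ^ s := key
    _ = (∑ i, c i ^ s) ^ (1 - s) * (∑ i, a i * c i ^ (s - 1)) ^ s := by
        congr 1
        congr 1
        exact Finset.sum_congr rfl fun i _ => h2 i

open Finset in
/-- Reverse Minkowski inequality: superadditivity of `x ↦ (∑ xᵢˢ)^{1/s}` for `0 < s ≤ 1`. -/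
lemma aux_superadd {n : ℕ} (s : ℝ) (hs0 : 0 < s) (hs1 : s ≤ 1) (a b : Fin n → ℝ)
    (ha : ∀ i, 0 ≤ a i) (hb : ∀ i, 0 ≤ b i) :
    (∑ i, a i ^ s) ^ (1/s) + (∑ i, b i ^ s) ^ (1/s)
      ≤ (∑ i, (a i + b i) ^ s) ^ (1/s) := by
  set c : Fin n → ℝ := fun i => a i + b i with hc_def
  have hc : ∀ i, 0 ≤ c i := fun i => add_nonneg (ha i) (hb i)
  set S : ℝ := ∑ i, c i ^ s with hS_def
  have hS0 : 0 ≤ S := Finset.sum_nonneg fun i _ => rpow_nonneg (hc i) _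
  rcases eq_or_lt_of_le hS0 with hS | hS
  · have hzero : ∀ i, c i = 0 := by
      intro i
      have h := (Finset.sum_eq_zero_iff_of_nonneg
        (fun i _ => rpow_nonneg (hc i) s)).1 hS.symm i (Finset.mem_univ i)
      by_contra hne
      exact ((rpow_pos_of_pos (lt_of_le_of_ne (hc i) (Ne.symm hne)) s).ne' h).elim
    have haz : ∀ i, a i = 0 := fun i =>
      le_antisymm (by have := hzero i; simp only [hc_def] at this; nlinarith [hb i]) (ha i)
    have hbz : ∀ i, b i = 0 := fun i =>
      le_antisymm (by have := hzero i; simp only [hc_def] at this; nlinarith [ha i]) (hb i)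
    have h1 : ∀ i, a i + b i = 0 := fun i => by rw [haz, hbz, add_zero]
    simp only [haz, hbz, h1, zero_rpow hs0.ne', Finset.sum_const_zero,
      zero_rpow ((one_div_pos.2 hs0).ne' : (1:ℝ)/s ≠ 0), add_zero]
    exact rpow_nonneg hS0 _
  · set A : ℝ := ∑ i, a i * c i ^ (s - 1) with hA_def
    set B : ℝ := ∑ i, b i * c i ^ (s - 1) with hB_def
    have hA0 : 0 ≤ A := Finset.sum_nonneg fun i _ => mul_nonneg (ha i) (rpow_nonneg (hc i) _)
    have hB0 : 0 ≤ B := Finset.sum_nonneg fun i _ => mul_nonneg (hb i) (rpow_nonneg (hc i) _)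
    have hAB : A + B = S := by
      rw [hA_def, hB_def, hS_def, ← Finset.sum_add_distrib]
      refine Finset.sum_congr rfl fun i _ => ?_
      rcases eq_or_lt_of_le (hc i) with h | h
      · have haz : a i = 0 := by have := h.symm; simp only [hc_def] at this; nlinarith [hb i, ha i]
        have hbz : b i = 0 := by have := h.symm; simp only [hc_def] at this; nlinarith [hb i, ha i]
        rw [haz, hbz, ← h]
        simp [zero_rpow hs0.ne']
      · rw [← add_mul]
        show c i * c i ^ (s - 1) = c i ^ s
        rw [rpow_sub_one h.ne']
        field_simp
    have step_a := aux_step s hs0 hs1 a c ha hc (fun i => le_add_of_nonneg_right (hb i))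
    have step_b := aux_step s hs0 hs1 b c hb hc (fun i => le_add_of_nonneg_left (ha i))
    have hsum_a : 0 ≤ ∑ i, a i ^ s := Finset.sum_nonneg fun i _ => rpow_nonneg (ha i) _
    have hsum_b : 0 ≤ ∑ i, b i ^ s := Finset.sum_nonneg fun i _ => rpow_nonneg (hb i) _
    have hpow : ∀ X : ℝ, 0 ≤ X → (S ^ (1 - s) * X ^ s) ^ (1/s) = S ^ ((1 - s)/s) * X := by
      intro X hX
      rw [Real.mul_rpow (rpow_nonneg hS0 _) (rpow_nonneg hX _),
        ← Real.rpow_mul hS0, ← Real.rpow_mul hX,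
        mul_one_div_cancel hs0.ne', rpow_one, mul_one_div]
    have ha' : (∑ i, a i ^ s) ^ (1/s) ≤ S ^ ((1 - s)/s) * A := by
      rw [← hpow A hA0]
      exact Real.rpow_le_rpow hsum_a step_a (by positivity)
    have hb' : (∑ i, b i ^ s) ^ (1/s) ≤ S ^ ((1 - s)/s) * B := by
      rw [← hpow B hB0]
      exact Real.rpow_le_rpow hsum_b step_b (by positivity)
    have hexp : (1 - s)/s + 1 = 1/s := by field_simp; ring
    have hfin : S ^ ((1 - s)/s) * A + S ^ ((1 - s)/s) * B = S ^ (1/s) := by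
      rw [← mul_add, hAB, ← Real.rpow_add_one hS.ne', hexp]
    calc (∑ i, a i ^ s) ^ (1/s) + (∑ i, b i ^ s) ^ (1/s)
        ≤ S ^ ((1 - s)/s) * A + S ^ ((1 - s)/s) * B := add_le_add ha' hb'
      _ = S ^ (1/s) := hfin

open Finset in
/-- Positive homogeneity of `x ↦ (∑ xᵢˢ)^{1/s}`. -/
lemma aux_hom {n : ℕ} (s : ℝ) (hs0 : 0 < s) (t : ℝ) (ht : 0 ≤ t) (x : Fin n → ℝ)
    (hx : ∀ i, 0 ≤ x i) :
    (∑ i, (t * x i) ^ s) ^ (1/s) = t * (∑ i, x i ^ s) ^ (1/s) := by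
  have h1 : ∀ i, (t * x i) ^ s = t ^ s * x i ^ s := fun i => mul_rpow ht (hx i)
  simp_rw [h1, ← Finset.mul_sum]
  rw [Real.mul_rpow (rpow_nonneg ht _) (Finset.sum_nonneg fun i _ => rpow_nonneg (hx i) _),
    ← Real.rpow_mul ht, mul_one_div_cancel hs0.ne', rpow_one]

/-- Let `p > 1` and `r ∈ (1, p]`. Then `x ↦ (1/p)(∑ᵢ xᵢ^{r/p})^{p/r}` is concave on the open
positive orthant `(0,∞)ⁿ`; i.e. `V(x) = |x|_r^p/p` satisfies that `x ↦ V(x^{1/p})` is concave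
there. -/
theorem lr_norm_pow_concave (n : ℕ) (p r : ℝ) (hp : 1 < p) (hr : 1 < r) (hrp : r ≤ p) :
    ConcaveOn ℝ {x : Fin n → ℝ | ∀ i, 0 < x i}
      (fun x => (1 / p) * (∑ i, x i ^ (r / p)) ^ (p / r)) := by
  have hp0 : 0 < p := by linarith
  have hr0 : 0 < r := by linarith
  set s : ℝ := r / p with hs_def
  have hs0 : 0 < s := div_pos hr0 hp0
  have hs1 : s ≤ 1 := (div_le_one hp0).2 hrp
  have hps : p / r = 1 / s := by rw [hs_def, one_div_div]
  constructor
  · intro x hx y hy a b ha hb hab i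
    simp only [Pi.add_apply, Pi.smul_apply, smul_eq_mul]
    rcases lt_or_ge 0 a with h | h
    · exact add_pos_of_pos_of_nonneg (mul_pos h (hx i)) (mul_nonneg hb (hy i).le)
    · have ha0 : a = 0 := le_antisymm h ha
      have hb1 : b = 1 := by linarith
      simp [ha0, hb1, hy i]
  · intro x hx y hy a b ha hb hab
    simp only [smul_eq_mul]
    have hx' : ∀ i, 0 ≤ x i := fun i => (hx i).le
    have hy' : ∀ i, 0 ≤ y i := fun i => (hy i).le
    have key := aux_superadd s hs0 hs1 (fun i => a * x i) (fun i => b * y i)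
      (fun i => mul_nonneg ha (hx' i)) (fun i => mul_nonneg hb (hy' i))
    rw [aux_hom s hs0 a ha x hx', aux_hom s hs0 b hb y hy'] at key
    have hmain : a * (∑ i, x i ^ s) ^ (1/s) + b * (∑ i, y i ^ s) ^ (1/s)
        ≤ (∑ i, ((a • x + b • y) i) ^ s) ^ (1/s) := by
      have : ∀ i, (a • x + b • y) i = a * x i + b * y i := fun i => rfl
      simp_rw [this]
      exact key
    calc a * (1 / p * (∑ i, x i ^ (r/p)) ^ (p/r)) + b * (1 / p * (∑ i, y i ^ (r/p)) ^ (p/r))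
        = (1/p) * (a * (∑ i, x i ^ s) ^ (1/s) + b * (∑ i, y i ^ s) ^ (1/s)) := by
          rw [hps]; ring
      _ ≤ (1/p) * (∑ i, ((a • x + b • y) i) ^ s) ^ (1/s) := by
          apply mul_le_mul_of_nonneg_left hmain (by positivity)
      _ = 1 / p * (∑ i, ((a • x + b • y) i) ^ (r/p)) ^ (p/r) := by rw [hps]
end

section
/- On the sphere S^{n−1} ⊂ ℝⁿ, consider the operator L f = Δ_{S^{n−1}} f + (2/q − 1)⟨ω, ∇_{S^{n−1}} f⟩ with ω = (1/x₁, …, 1/xₙ), defined on the open positive orthant of the sphere, where q > 1. Then L(x_i²) = −(4n/q)(x_i² − 1/n) for each coordinate function x_i restricted to S^{n−1}. -/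
open Real


variable {n : ℕ}
local notation "E" => EuclideanSpace ℝ (Fin n)

noncomputable def Dq (n : ℕ) : EuclideanSpace ℝ (Fin n) → ℝ := fun y => ∑ k, y k ^ 2

lemma Dq_eq_norm_sq (y : E) : Dq n y = ‖y‖ ^ 2 := by
  rw [EuclideanSpace.norm_eq, sq_sqrt (by positivity)]
  simp [Dq, Real.norm_eq_abs, sq_abs]

lemma hasFDerivAt_coord_sq (k : Fin n) (y : E) :
    HasFDerivAt (fun y : E => y k ^ 2) ((2 * y k) • (EuclideanSpace.proj k : E →L[ℝ] ℝ)) y := by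
  simpa [Function.comp_def] using (hasDerivAt_pow 2 (y k)).comp_hasFDerivAt y
    ((EuclideanSpace.proj k : E →L[ℝ] ℝ).hasFDerivAt (x := y))

lemma hasFDerivAt_Dq (y : E) :
    HasFDerivAt (Dq n) (∑ k, (2 * y k) • (EuclideanSpace.proj k : E →L[ℝ] ℝ)) y :=
  HasFDerivAt.fun_sum (fun k _ => hasFDerivAt_coord_sq k y)

lemma hasFDerivAt_inv_Dq (y : E) (hy : Dq n y ≠ 0) :
    HasFDerivAt (fun y : E => (Dq n y)⁻¹)
      ((-(Dq n y ^ 2)⁻¹) • ∑ k, (2 * y k) • (EuclideanSpace.proj k : E →L[ℝ] ℝ)) y :=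
  (hasDerivAt_inv hy).comp_hasFDerivAt y (hasFDerivAt_Dq y)

noncomputable def Phi {n : ℕ} (i : Fin n) (y : EuclideanSpace ℝ (Fin n)) :
    EuclideanSpace ℝ (Fin n) →L[ℝ] ℝ :=
  (y i ^ 2) • ((-(Dq n y ^ 2)⁻¹) •
      ∑ k, (2 * y k) • (EuclideanSpace.proj k : EuclideanSpace ℝ (Fin n) →L[ℝ] ℝ))
    + (Dq n y)⁻¹ • ((2 * y i) • (EuclideanSpace.proj i : EuclideanSpace ℝ (Fin n) →L[ℝ] ℝ))

lemma hasFDerivAt_F (i : Fin n) (y : E) (hy : Dq n y ≠ 0) :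
    HasFDerivAt (fun y : E => y i ^ 2 / Dq n y) (Phi i y) y := by
  have h := (hasFDerivAt_coord_sq i y).mul (hasFDerivAt_inv_Dq y hy)
  simpa [div_eq_mul_inv, Phi, Pi.mul_def] using h

lemma Phi_apply (i j : Fin n) (y : E) :
    Phi i y (EuclideanSpace.single j 1)
      = y i ^ 2 * ((-(Dq n y ^ 2)⁻¹) * (2 * y j))
        + (Dq n y)⁻¹ * (2 * y i * (EuclideanSpace.single j 1 : E) i) := by
  simp [Phi, ContinuousLinearMap.sum_apply, EuclideanSpace.single_apply, mul_ite,
    Finset.sum_ite_eq', mul_comm]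

noncomputable def gj {n : ℕ} (i j : Fin n) (y : EuclideanSpace ℝ (Fin n)) : ℝ :=
  y i ^ 2 * ((-(Dq n y ^ 2)⁻¹) * (2 * y j))
    + (Dq n y)⁻¹ * (2 * y i * (EuclideanSpace.single j 1 : EuclideanSpace ℝ (Fin n)) i)

lemma fderiv_gj_apply (i j : Fin n) (x : E) (hx1 : Dq n x = 1) :
    fderiv ℝ (gj i j) x (EuclideanSpace.single j 1)
      = 2 * ((EuclideanSpace.single j 1 : E) i) ^ 2
        - 8 * ((EuclideanSpace.single j 1 : E) i) * x i * x j
        - 2 * x i ^ 2 + 8 * x i ^ 2 * x j ^ 2 := by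
  have hy : Dq n x ≠ 0 := by rw [hx1]; norm_num
  set c : ℝ := (EuclideanSpace.single j 1 : E) i with hc
  have h2j : HasFDerivAt (fun y : E => 2 * y j) ((2:ℝ) • (EuclideanSpace.proj j : E →L[ℝ] ℝ)) x := by
    simpa using ((EuclideanSpace.proj j : E →L[ℝ] ℝ).hasFDerivAt (x := x)).const_mul (2:ℝ)
  have h2i : HasFDerivAt (fun y : E => 2 * y i) ((2:ℝ) • (EuclideanSpace.proj i : E →L[ℝ] ℝ)) x := by
    simpa using ((EuclideanSpace.proj i : E →L[ℝ] ℝ).hasFDerivAt (x := x)).const_mul (2:ℝ)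
  have hDsq : HasFDerivAt (fun y : E => Dq n y ^ 2)
      ((2 * Dq n x) • ∑ k, (2 * x k) • (EuclideanSpace.proj k : E →L[ℝ] ℝ)) x := by
    simpa [Function.comp_def] using (hasDerivAt_pow 2 (Dq n x)).comp_hasFDerivAt x (hasFDerivAt_Dq x)
  have hinvsq : HasFDerivAt (fun y : E => (Dq n y ^ 2)⁻¹)
      ((-((Dq n x ^ 2) ^ 2)⁻¹) • ((2 * Dq n x) •
        ∑ k, (2 * x k) • (EuclideanSpace.proj k : E →L[ℝ] ℝ))) x :=
    (hasDerivAt_inv (pow_ne_zero 2 hy)).comp_hasFDerivAt x hDsq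
  have hA := (hasFDerivAt_coord_sq i x).mul (hinvsq.neg.mul h2j)
  have hB := (hasFDerivAt_inv_Dq x hy).mul (h2i.mul (hasFDerivAt_const c x))
  have h : HasFDerivAt (gj i j) _ x := hA.add hB
  rw [h.fderiv]
  simp [ContinuousLinearMap.sum_apply, EuclideanSpace.single_apply, mul_ite,
    Finset.sum_ite_eq', hx1, ← hc]
  have hc' : c = if i = j then 1 else 0 := by
    rw [hc, EuclideanSpace.single_apply]
  by_cases hij : i = j <;> simp [hc', hij] <;> ring

/-- The Euclidean Laplacian `Δg(x) = ∑ᵢ ∂²g/∂xᵢ²(x)`. Via the relation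
`Δ = ∂²_r + ((n−1)/r)∂_r + r^{−2}Δ_{S^{n−1}}` applied to a `0`-homogeneous extension,
it computes the spherical Laplace–Beltrami operator on the unit sphere. -/
noncomputable def lapE {n : ℕ} (g : EuclideanSpace ℝ (Fin n) → ℝ)
    (x : EuclideanSpace ℝ (Fin n)) : ℝ :=
  ∑ i, fderiv ℝ (fun y => fderiv ℝ g y (EuclideanSpace.single i 1)) x
    (EuclideanSpace.single i 1)

/-- On `S^{n−1}`, consider `L f = Δ_{S^{n−1}} f + (2/q − 1)⟨ω, ∇_{S^{n−1}} f⟩` with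
`ω = (1/x₁, …, 1/xₙ)` on the positive orthant of the sphere, `q > 1`. Then
`L(xᵢ²) = −(4n/q)(xᵢ² − 1/n)` for each coordinate function `xᵢ` restricted to the sphere.
The spherical Laplacian and gradient of `xᵢ²` are realized through its `0`-homogeneous
extension `F(y) = (yᵢ/|y|)²`. -/
theorem spherical_operator_coord_sq (n : ℕ) (q : ℝ) (hq : 1 < q)
    (x : EuclideanSpace ℝ (Fin n)) (hx : ‖x‖ = 1) (hposx : ∀ i, 0 < x i) (i : Fin n) :
    lapE (fun y : EuclideanSpace ℝ (Fin n) => (y i / ‖y‖) ^ 2) x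
      + (2 / q - 1) *
          ∑ j, (1 / x j) *
            fderiv ℝ (fun y : EuclideanSpace ℝ (Fin n) => (y i / ‖y‖) ^ 2) x
              (EuclideanSpace.single j 1)
      = -((4 * (n : ℝ)) / q) * (x i ^ 2 - 1 / (n : ℝ)) := by
  have hn0 : 0 < n := i.pos
  have hn : (n : ℝ) ≠ 0 := Nat.cast_ne_zero.2 hn0.ne'
  have hq0 : q ≠ 0 := by linarith
  have hFeq : (fun y : EuclideanSpace ℝ (Fin n) => (y i / ‖y‖) ^ 2) = fun y : EuclideanSpace ℝ (Fin n) => y i ^ 2 / Dq n y := by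
    funext y; rw [div_pow, Dq_eq_norm_sq]
  rw [hFeq]
  have hx1 : Dq n x = 1 := by rw [Dq_eq_norm_sq, hx]; norm_num
  have hy : Dq n x ≠ 0 := by rw [hx1]; norm_num
  -- first derivative values
  have hfd : ∀ j, fderiv ℝ (fun y : EuclideanSpace ℝ (Fin n) => y i ^ 2 / Dq n y) x (EuclideanSpace.single j 1)
      = gj i j x := fun j => by
    rw [(hasFDerivAt_F i x hy).fderiv]; exact Phi_apply i j x
  -- second derivative values
  have hcont : Continuous (Dq n) := by
    unfold Dq; fun_prop
  have hmem : {y : EuclideanSpace ℝ (Fin n) | Dq n y ≠ 0} ∈ nhds x :=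
    (IsOpen.preimage hcont isOpen_compl_singleton).mem_nhds hy
  have hsec : ∀ j, fderiv ℝ (fun y : EuclideanSpace ℝ (Fin n) =>
        fderiv ℝ (fun y : EuclideanSpace ℝ (Fin n) => y i ^ 2 / Dq n y) y (EuclideanSpace.single j 1)) x
        (EuclideanSpace.single j 1)
      = 2 * ((EuclideanSpace.single j 1 : EuclideanSpace ℝ (Fin n)) i) ^ 2
        - 8 * ((EuclideanSpace.single j 1 : EuclideanSpace ℝ (Fin n)) i) * x i * x j
        - 2 * x i ^ 2 + 8 * x i ^ 2 * x j ^ 2 := by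
    intro j
    have hev : (fun y : EuclideanSpace ℝ (Fin n) => fderiv ℝ (fun y : EuclideanSpace ℝ (Fin n) => y i ^ 2 / Dq n y) y
        (EuclideanSpace.single j 1)) =ᶠ[nhds x] gj i j := by
      filter_upwards [hmem] with y hyy
      rw [(hasFDerivAt_F i y hyy).fderiv]; exact Phi_apply i j y
    rw [hev.fderiv_eq, fderiv_gj_apply i j x hx1]
  -- the Laplacian sum
  have hlap : lapE (fun y : EuclideanSpace ℝ (Fin n) => y i ^ 2 / Dq n y) x = 2 - 2 * n * x i ^ 2 := by
    rw [lapE]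
    rw [Finset.sum_congr rfl (fun j _ => hsec j)]
    have step : ∀ j : Fin n,
        2 * ((EuclideanSpace.single j 1 : EuclideanSpace ℝ (Fin n)) i) ^ 2
          - 8 * ((EuclideanSpace.single j 1 : EuclideanSpace ℝ (Fin n)) i) * x i * x j
          - 2 * x i ^ 2 + 8 * x i ^ 2 * x j ^ 2
        = ((if i = j then (2:ℝ) else 0) - (if i = j then 8 * x i * x j else 0))
          + (8 * x i ^ 2 * x j ^ 2 - 2 * x i ^ 2) := by
      intro j
      rw [EuclideanSpace.single_apply]
      split_ifs <;> ring
    rw [Finset.sum_congr rfl (fun j _ => step j)]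
    rw [Finset.sum_add_distrib, Finset.sum_sub_distrib, Finset.sum_sub_distrib]
    have hDq : ∑ j, 8 * x i ^ 2 * x j ^ 2 = 8 * x i ^ 2 := by
      rw [← Finset.mul_sum]
      have : ∑ j, x j ^ 2 = 1 := hx1
      rw [this, mul_one]
    simp [Finset.sum_ite_eq, hDq, Finset.sum_const, Finset.card_univ, nsmul_eq_mul]
    ring
  -- the gradient sum
  have hgrad : ∑ j, (1 / x j) * fderiv ℝ (fun y : EuclideanSpace ℝ (Fin n) => y i ^ 2 / Dq n y) x
      (EuclideanSpace.single j 1) = 2 - 2 * n * x i ^ 2 := by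
    have step : ∀ j : Fin n, (1 / x j) * gj i j x
        = (if i = j then (2:ℝ) else 0) - 2 * x i ^ 2 := by
      intro j
      have hxj : x j ≠ 0 := (hposx j).ne'
      rw [gj, hx1, EuclideanSpace.single_apply]
      split_ifs with h
      · subst h; field_simp; ring
      · field_simp; ring
    rw [Finset.sum_congr rfl (fun j _ => by rw [hfd j, step j])]
    rw [Finset.sum_sub_distrib]
    simp [Finset.sum_ite_eq, Finset.sum_const, Finset.card_univ, nsmul_eq_mul]
    ring
  rw [hlap, hgrad]
  field_simp
  ring
end
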